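/- Let d, m ∈ ℕ with m ≥ 2, let 0 < ε₁ ≤ 0.5, 0 < δ₁ ≤ 0.5 and 0 < ε_d < 0.1. Let S = {(x_1,y_1),…,(x_m,y_m)} ⊆ ℝ^d × {−1,1} satisfy Assumption(ψ, φ) with ψ ≤ 0.1 and φ ≤ ε_d/(4m). Suppose w ∈ ℝ^d is an (ε₁, δ₁)-approximate KKT point of the margin-maximization problem w.r.t. S with multipliers λ_1,…,λ_m. Fix l ∈ [m] and set ŵ = w − λ_l y_l x_l. Then the rescaled vector (1/(1 − 0.6·ε_d/m))·ŵ is an (ε₁ + ε₁ε_d/(m − ε_d), δ₁ + δ₁ε_d/(m − ε_d) + 7.2·ε_d/m)-approximate KKT point of the margin-maximization problem w.r.t. the retained dataset S \ {(x_l, y_l)}, with multipliers λ_i/(1 − 0.6·ε_d/m) for i ∈ [m], i ≠ l. -/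

import Mathlib

open Finset

set_option maxHeartbeats 4000000
set_option linter.unusedVariables false

private lemma stmt0_aux1 (L M : ℝ) (hL : 0 ≤ L) (hM : 2 ≤ M)
    (h : 0.875 * L ^ 2 ≤ 1.53 * L * M + 0.5 * M ^ 2) : L ≤ 2.05 * M := by
  nlinarith [sq_nonneg (L - 2.05 * M), sq_nonneg M, mul_nonneg hL (by linarith : (0:ℝ) ≤ M)]

private lemma stmt0_aux2 (a : ℝ) (ha : 0 ≤ a)
    (h : 0.9 * a ^ 2 ≤ a * 1.57625 + 0.5) : a ≤ 2.1 := by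
  nlinarith [sq_nonneg (a - 2.1)]

private lemma stmt0_aux3 (δ u : ℝ) (hδ0 : 0 < δ) (hδ : δ ≤ 0.5) (hu0 : 0 < u)
    (hu : u ≤ 0.05) : δ + 2.3625 * u ≤ (δ + 7.2 * u) * (1 - 0.6 * u) ^ 2 := by
  nlinarith [mul_pos hu0 hu0, mul_pos (mul_pos hu0 hu0) hu0, mul_pos hδ0 hu0,
    mul_nonneg (mul_nonneg hδ0.le hu0.le) hu0.le]

private lemma stmt0_aux4 (ε e M : ℝ) (hε : 0 < ε) (he : 0 < e) (heM : e < 1)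
    (hM : 2 ≤ M) : 1 / (1 - 0.6 * e / M) * ε ≤ ε + ε * e / (M - e) := by
  have hM0 : (0:ℝ) < M := by linarith
  have hMe : (0:ℝ) < M - e := by linarith
  have hc : (0:ℝ) < 1 - 0.6 * e / M := by
    have : 0.6 * e / M < 1 := by rw [div_lt_one hM0]; linarith
    linarith
  rw [div_mul_eq_mul_div, one_mul, div_le_iff₀ hc]
  have hexp : (ε + ε * e / (M - e)) * (1 - 0.6 * e / M) - ε =
      ε * (0.4 * e) / (M - e) := by
    field_simp
    ring
  have hpos : 0 ≤ ε * (0.4 * e) / (M - e) := by positivity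
  linarith [hexp, hpos]


/-- Unlearning a single point from a linear predictor via one gradient-ascent
step: the rescaled vector `(1/(1 - 0.6 εd/m)) • (w - λ_l y_l x_l)` is an approximate KKT point
of the margin-maximization problem w.r.t. the retained dataset `S \ {(x_l, y_l)}`,
with multipliers `λ_i / (1 - 0.6 εd/m)`. -/
theorem stmt_0
    (d m : ℕ) (hm : 2 ≤ m)
    (ε₁ δ₁ εd ψ φ : ℝ)
    (hε₁pos : 0 < ε₁) (hε₁le : ε₁ ≤ 0.5)
    (hδ₁pos : 0 < δ₁) (hδ₁le : δ₁ ≤ 0.5)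
    (hεdpos : 0 < εd) (hεdlt : εd < 0.1)
    (hψ : ψ ≤ 0.1) (hφ : φ ≤ εd / (4 * m))
    (x : Fin m → EuclideanSpace ℝ (Fin d)) (y : Fin m → ℝ)
    (hy : ∀ i, y i = 1 ∨ y i = -1)
    (hnorm : ∀ i, 1 - ψ ≤ ‖x i‖ ^ 2 ∧ ‖x i‖ ^ 2 ≤ 1 + ψ)
    (hortho : ∀ i j, i ≠ j → |(inner ℝ (x i) (x j) : ℝ)| ≤ φ)
    (w : EuclideanSpace ℝ (Fin d)) (lam : Fin m → ℝ)
    (hlam : ∀ i, 0 ≤ lam i)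
    (hstat : ‖w - ∑ i, (lam i * y i) • x i‖ ≤ ε₁)
    (hcs : ∀ i, lam i * (y i * (inner ℝ w (x i) : ℝ) - 1) ≤ δ₁)
    (hpf : ∀ i, 1 ≤ y i * (inner ℝ w (x i) : ℝ))
    (l : Fin m) :
    (∀ i, i ≠ l → 0 ≤ lam i / (1 - 0.6 * εd / m)) ∧
    ‖(1 / (1 - 0.6 * εd / m)) • (w - (lam l * y l) • x l) -
        ∑ i ∈ Finset.univ.erase l, ((lam i / (1 - 0.6 * εd / m)) * y i) • x i‖ ≤
      ε₁ + ε₁ * εd / (m - εd) ∧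
    (∀ i, i ≠ l →
      (lam i / (1 - 0.6 * εd / m)) *
          (y i * (inner ℝ ((1 / (1 - 0.6 * εd / m)) • (w - (lam l * y l) • x l)) (x i) : ℝ) - 1) ≤
        δ₁ + δ₁ * εd / (m - εd) + 7.2 * εd / m) ∧
    (∀ i, i ≠ l →
      1 ≤ y i * (inner ℝ ((1 / (1 - 0.6 * εd / m)) • (w - (lam l * y l) • x l)) (x i) : ℝ)) := by
  have hm' : (2 : ℝ) ≤ (m : ℝ) := by exact_mod_cast hm
  have hm0 : (0 : ℝ) < (m : ℝ) := by linarith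
  set c : ℝ := 1 - 0.6 * εd / m with hc_def
  have hem : εd / m ≤ 0.05 := by
    rw [div_le_iff₀ hm0]; nlinarith
  have hem0 : 0 < εd / m := div_pos hεdpos hm0
  have hc_lb : (0.97 : ℝ) ≤ c := by
    have : 0.6 * εd / m ≤ 0.03 := by rw [div_le_iff₀ hm0]; nlinarith
    simp only [hc_def]; linarith
  have hc0 : 0 < c := lt_of_lt_of_le (by norm_num) hc_lb
  have hc1 : c < 1 := by
    have : 0 < 0.6 * εd / m := by positivity
    simp only [hc_def]; linarith
  have hmε : (0 : ℝ) < (m : ℝ) - εd := by linarith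
  -- φ ≥ 0
  have hφ0 : 0 ≤ φ := by
    have h01 : (⟨0, by omega⟩ : Fin m) ≠ ⟨1, by omega⟩ := by
      intro h; simpa using congrArg Fin.val h
    exact le_trans (abs_nonneg _) (hortho _ _ h01)
  have hφu : φ ≤ 0.025 / m := by
    have : εd / (4 * m) ≤ 0.025 / m := by
      rw [div_le_div_iff₀ (by positivity) hm0]; nlinarith
    linarith
  have hy1 : ∀ i, y i * y i = 1 := by
    intro i; rcases hy i with h | h <;> rw [h] <;> norm_num
  have hyabs : ∀ i, |y i| = 1 := by
    intro i; rcases hy i with h | h <;> rw [h] <;> norm_num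
  have hxn : ∀ i, ‖x i‖ ≤ 1.05 := by
    intro i
    have h := (hnorm i).2
    nlinarith [norm_nonneg (x i)]
  set v : EuclideanSpace ℝ (Fin d) := ∑ i, (lam i * y i) • x i with hv_def
  set L : ℝ := ∑ i, lam i with hL_def
  have hL0 : 0 ≤ L := Finset.sum_nonneg fun i _ => hlam i
  have hlamL : ∀ j, lam j ≤ L :=
    fun j => Finset.single_le_sum (fun i _ => hlam i) (mem_univ j)
  -- inner ℝ v (x j) expansion
  have hvx : ∀ j, (inner ℝ v (x j) : ℝ) =
      lam j * y j * ‖x j‖ ^ 2 + ∑ i ∈ univ.erase j, lam i * y i * (inner ℝ (x i) (x j) : ℝ) := by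
    intro j
    have h1 : (inner ℝ v (x j) : ℝ) = ∑ i, lam i * y i * (inner ℝ (x i) (x j) : ℝ) := by
      rw [hv_def, sum_inner]
      exact Finset.sum_congr rfl fun i _ => real_inner_smul_left _ _ _
    rw [h1, ← Finset.sum_erase_add _ _ (mem_univ j), real_inner_self_eq_norm_sq]
    ring
  -- off-diagonal sums are small
  have hS : ∀ j, |∑ i ∈ univ.erase j, lam i * y i * (inner ℝ (x i) (x j) : ℝ)| ≤ φ * L := by
    intro j
    calc |∑ i ∈ univ.erase j, lam i * y i * (inner ℝ (x i) (x j) : ℝ)|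
        ≤ ∑ i ∈ univ.erase j, |lam i * y i * (inner ℝ (x i) (x j) : ℝ)| :=
          Finset.abs_sum_le_sum_abs _ _
      _ ≤ ∑ i ∈ univ.erase j, lam i * φ := by
          apply Finset.sum_le_sum
          intro i hi
          have hij : i ≠ j := Finset.ne_of_mem_erase hi
          rw [abs_mul, abs_mul, hyabs i, abs_of_nonneg (hlam i), mul_one]
          exact mul_le_mul_of_nonneg_left (hortho i j hij) (hlam i)
      _ ≤ ∑ i, lam i * φ := by
          apply Finset.sum_le_sum_of_subset_of_nonneg (Finset.erase_subset _ _)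
          intro i _ _; exact mul_nonneg (hlam i) hφ0
      _ = φ * L := by rw [hL_def, ← Finset.sum_mul]; ring
  have hwvn : ‖w - v‖ ≤ ε₁ := hstat
  -- ⟨w, v⟩ expansion and bounds
  have hwv_eq : (inner ℝ w v : ℝ) = ∑ i, lam i * (y i * (inner ℝ w (x i) : ℝ)) := by
    rw [hv_def, inner_sum]
    refine Finset.sum_congr rfl fun i _ => ?_
    rw [real_inner_smul_right]
    ring
  have hwv_ub : (inner ℝ w v : ℝ) ≤ L + m * δ₁ := by
    rw [hwv_eq]
    calc ∑ i, lam i * (y i * (inner ℝ w (x i) : ℝ)) ≤ ∑ i : Fin m, (lam i + δ₁) := by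
          apply Finset.sum_le_sum
          intro i _
          linarith [hcs i]
      _ = L + m * δ₁ := by
          rw [Finset.sum_add_distrib, hL_def]
          simp [mul_comm]
  have hwv_lb : ‖v‖ ^ 2 - ε₁ * ‖v‖ ≤ (inner ℝ w v : ℝ) := by
    have h1 : (inner ℝ w v : ℝ) = (inner ℝ (w - v) v : ℝ) + ‖v‖ ^ 2 := by
      rw [inner_sub_left, real_inner_self_eq_norm_sq]; ring
    have h2 : -(ε₁ * ‖v‖) ≤ (inner ℝ (w - v) v : ℝ) := by
      have := abs_real_inner_le_norm (w - v) v
      have h3 : ‖w - v‖ * ‖v‖ ≤ ε₁ * ‖v‖ :=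
        mul_le_mul_of_nonneg_right hwvn (norm_nonneg v)
      have := neg_abs_le ((inner ℝ (w - v) v : ℝ))
      linarith
    linarith
  -- ‖v‖² expansion
  have hv2 : ‖v‖ ^ 2 = ∑ j, (lam j ^ 2 * ‖x j‖ ^ 2 +
      lam j * (y j * ∑ i ∈ univ.erase j, lam i * y i * (inner ℝ (x i) (x j) : ℝ))) := by
    have h1 : ‖v‖ ^ 2 = ∑ j, lam j * y j * (inner ℝ v (x j) : ℝ) := by
      rw [← real_inner_self_eq_norm_sq, hv_def, inner_sum]
      exact Finset.sum_congr rfl fun i _ => real_inner_smul_right _ _ _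
    rw [h1]
    apply Finset.sum_congr rfl
    intro j _
    rw [hvx j]
    linear_combination (lam j ^ 2 * ‖x j‖ ^ 2) * (hy1 j)
  have hsumsq_lb : L ^ 2 ≤ m * ∑ j, lam j ^ 2 := by
    have := sq_sum_le_card_mul_sum_sq (s := (univ : Finset (Fin m))) (f := lam)
    simpa [hL_def] using this
  have hsumsq_ub : ∑ j, lam j ^ 2 ≤ L ^ 2 := by
    calc ∑ j, lam j ^ 2 ≤ ∑ j, lam j * L := by
          apply Finset.sum_le_sum
          intro j _
          nlinarith [hlam j, hlamL j]
      _ = L ^ 2 := by rw [hL_def, ← Finset.sum_mul]; ring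
  have hv2_lb : (1 - ψ) * (∑ j, lam j ^ 2) - φ * L ^ 2 ≤ ‖v‖ ^ 2 := by
    rw [hv2]
    have h1 : (1 - ψ) * (∑ j, lam j ^ 2) - φ * L ^ 2 ≤
        ∑ j, ((1 - ψ) * lam j ^ 2 - lam j * (φ * L)) := by
      rw [Finset.sum_sub_distrib, ← Finset.mul_sum]
      have : ∑ j, lam j * (φ * L) = φ * L ^ 2 := by
        rw [← Finset.sum_mul, hL_def]; ring
      rw [this]
    refine le_trans h1 (Finset.sum_le_sum ?_)
    intro j _
    have h2 := (hnorm j).1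
    have h3 := hS j
    have h4 : -(lam j * (φ * L)) ≤ lam j * (y j * ∑ i ∈ univ.erase j, lam i * y i * (inner ℝ (x i) (x j) : ℝ)) := by
      have h5 : |y j * ∑ i ∈ univ.erase j, lam i * y i * (inner ℝ (x i) (x j) : ℝ)| ≤ φ * L := by
        rw [abs_mul, hyabs j, one_mul]; exact h3
      have h6 := mul_le_mul_of_nonneg_left
        (neg_abs_le (y j * ∑ i ∈ univ.erase j, lam i * y i * (inner ℝ (x i) (x j) : ℝ))) (hlam j)
      have h7 := mul_le_mul_of_nonneg_left h5 (hlam j)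
      have h8 : lam j * -|y j * ∑ i ∈ univ.erase j, lam i * y i * (inner ℝ (x i) (x j) : ℝ)|
          = -(lam j * |y j * ∑ i ∈ univ.erase j, lam i * y i * (inner ℝ (x i) (x j) : ℝ)|) := by ring
      linarith [h6, h7, h8.le, h8.ge]
    have h9 := mul_le_mul_of_nonneg_left h2 (sq_nonneg (lam j))
    linarith [h4, h9]
  have hv2_ub : ‖v‖ ^ 2 ≤ (1 + ψ) * (∑ j, lam j ^ 2) + φ * L ^ 2 := by
    rw [hv2]
    have h1 : ∑ j, ((1 + ψ) * lam j ^ 2 + lam j * (φ * L)) =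
        (1 + ψ) * (∑ j, lam j ^ 2) + φ * L ^ 2 := by
      rw [Finset.sum_add_distrib, ← Finset.mul_sum]
      have : ∑ j, lam j * (φ * L) = φ * L ^ 2 := by
        rw [← Finset.sum_mul, hL_def]; ring
      rw [this]
    rw [← h1]
    apply Finset.sum_le_sum
    intro j _
    have h2 := (hnorm j).2
    have h3 := hS j
    have h5 : |y j * ∑ i ∈ univ.erase j, lam i * y i * (inner ℝ (x i) (x j) : ℝ)| ≤ φ * L := by
      rw [abs_mul, hyabs j, one_mul]; exact h3
    have h6 := mul_le_mul_of_nonneg_left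
      (le_trans (le_abs_self (y j * ∑ i ∈ univ.erase j, lam i * y i * (inner ℝ (x i) (x j) : ℝ))) h5)
      (hlam j)
    have h9 := mul_le_mul_of_nonneg_left h2 (sq_nonneg (lam j))
    linarith [h6, h9]
  have hφL2 : φ * L ^ 2 ≤ 0.025 * L ^ 2 / m := by
    calc φ * L ^ 2 ≤ 0.025 / m * L ^ 2 :=
          mul_le_mul_of_nonneg_right hφu (sq_nonneg L)
      _ = 0.025 * L ^ 2 / m := by ring
  have hvn_ub : ‖v‖ ≤ 1.06 * L := by
    have h1 : ‖v‖ ^ 2 ≤ 1.1236 * L ^ 2 := by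
      have h2 : φ * L ^ 2 ≤ 0.0125 * L ^ 2 := by
        have hq : (0.025 : ℝ) / m ≤ 0.0125 := by
          rw [div_le_iff₀ hm0]; nlinarith
        have := mul_le_mul_of_nonneg_right (le_trans hφu hq) (sq_nonneg L)
        linarith
      have hsq0 : (0:ℝ) ≤ ∑ j, lam j ^ 2 :=
        Finset.sum_nonneg (fun j (_ : j ∈ univ) => sq_nonneg (lam j))
      have h10 := mul_nonneg (by linarith : (0:ℝ) ≤ 0.1 - ψ) hsq0
      linarith [hsumsq_ub, hv2_ub, h2, h10]
    have h1' : ‖v‖ ^ 2 ≤ (1.06 * L) ^ 2 := by linarith [h1]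
    exact le_of_pow_le_pow_left₀ two_ne_zero (by positivity) h1'
  -- total multiplier bound
  have hLm : L ≤ 2.05 * m := by
    have hchain : (1 - ψ) * (∑ j, lam j ^ 2) - φ * L ^ 2 ≤ L + m * δ₁ + ε₁ * (1.06 * L) := by
      have h1 : ‖v‖ ^ 2 - ε₁ * ‖v‖ ≤ L + m * δ₁ := le_trans hwv_lb hwv_ub
      have h2 : ε₁ * ‖v‖ ≤ ε₁ * (1.06 * L) :=
        mul_le_mul_of_nonneg_left hvn_ub (le_of_lt hε₁pos)
      linarith [hv2_lb]
    have hsq0 : (0:ℝ) ≤ ∑ j, lam j ^ 2 :=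
      Finset.sum_nonneg (fun j (_ : j ∈ univ) => sq_nonneg (lam j))
    have k1 : 0.9 * L ^ 2 ≤ (1 - ψ) * ((m : ℝ) * ∑ j, lam j ^ 2) := by
      have := mul_nonneg (by linarith : (0:ℝ) ≤ 0.1 - ψ) (mul_nonneg hm0.le hsq0)
      linarith [hsumsq_lb]
    have k2 : (m : ℝ) * φ * L ^ 2 ≤ 0.025 * L ^ 2 := by
      have hmφ : (m : ℝ) * φ ≤ 0.025 := by
        have := mul_le_mul_of_nonneg_left hφu hm0.le
        have heq : (m : ℝ) * (0.025 / m) = 0.025 := by field_simp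
        linarith
      have := mul_le_mul_of_nonneg_right hmφ (sq_nonneg L)
      linarith
    have k3 := mul_le_mul_of_nonneg_left hchain hm0.le
    have k4 := mul_nonneg (by linarith : (0:ℝ) ≤ 0.5 - δ₁) (sq_nonneg (m : ℝ))
    have k5 := mul_nonneg (by linarith : (0:ℝ) ≤ 0.5 - ε₁) (mul_nonneg hm0.le hL0)
    have hmain : 0.875 * L ^ 2 ≤ 1.53 * L * m + 0.5 * (m : ℝ) ^ 2 := by nlinarith [k1, k2, k3, k4, k5]
    exact stmt0_aux1 L m hL0 hm' hmain
  have hφL : φ * L ≤ 0.05125 := by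
    calc φ * L ≤ (0.025 / m) * L := mul_le_mul_of_nonneg_right hφu hL0
      _ ≤ (0.025 / m) * (2.05 * m) := by
          have := mul_le_mul_of_nonneg_left hLm (by positivity : (0:ℝ) ≤ 0.025 / m)
          linarith
      _ = 0.05125 * ((m : ℝ) / m) := by ring
      _ = 0.05125 := by rw [div_self (ne_of_gt hm0), mul_one]
  -- individual multiplier bound
  have hlam_ub : ∀ j, lam j ≤ 2.1 := by
    intro j
    have hkey : lam j * ‖x j‖ ^ 2 = y j * (inner ℝ w (x j) : ℝ) - y j * (inner ℝ (w - v) (x j) : ℝ)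
        - y j * (∑ i ∈ univ.erase j, lam i * y i * (inner ℝ (x i) (x j) : ℝ)) := by
      have h1 : (inner ℝ w (x j) : ℝ) = (inner ℝ (w - v) (x j) : ℝ) + (inner ℝ v (x j) : ℝ) := by
        rw [inner_sub_left]; ring
      rw [h1, hvx j]
      linear_combination (-(lam j * ‖x j‖ ^ 2)) * (hy1 j)
    have h2 : |y j * (inner ℝ (w - v) (x j) : ℝ)| ≤ 0.525 := by
      rw [abs_mul, hyabs j, one_mul]
      calc |(inner ℝ (w - v) (x j) : ℝ)| ≤ ‖w - v‖ * ‖x j‖ := abs_real_inner_le_norm _ _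
        _ ≤ 0.5 * 1.05 := by
            apply mul_le_mul (le_trans hwvn hε₁le) (hxn j) (norm_nonneg _) (by norm_num)
        _ = 0.525 := by norm_num
    have h3 : |y j * (∑ i ∈ univ.erase j, lam i * y i * (inner ℝ (x i) (x j) : ℝ))| ≤ 0.05125 := by
      rw [abs_mul, hyabs j, one_mul]
      exact le_trans (hS j) hφL
    have h4 : lam j * ‖x j‖ ^ 2 ≤ y j * (inner ℝ w (x j) : ℝ) + 0.525 + 0.05125 := by
      have ha := neg_abs_le (y j * (inner ℝ (w - v) (x j) : ℝ))
      have hb := neg_abs_le (y j * (∑ i ∈ univ.erase j, lam i * y i * (inner ℝ (x i) (x j) : ℝ)))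
      linarith [hkey, h2, h3]
    have h5 : lam j * (y j * (inner ℝ w (x j) : ℝ)) ≤ lam j + δ₁ := by
      linarith [hcs j]
    have h6 : lam j ^ 2 * ‖x j‖ ^ 2 ≤ lam j + δ₁ + lam j * 0.57625 := by
      have h7 := mul_le_mul_of_nonneg_left h4 (hlam j)
      linarith [h7, h5]
    have h8 : 0.9 * lam j ^ 2 ≤ lam j * 1.57625 + 0.5 := by
      have h9 : (0:ℝ) ≤ ‖x j‖ ^ 2 - 0.9 := by linarith [(hnorm j).1]
      have h10 := mul_nonneg (sq_nonneg (lam j)) h9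
      linarith [h6, h10]
    exact stmt0_aux2 (lam j) (hlam j) h8
  -- rewrite inner products with the new vector
  have hinner : ∀ i, (inner ℝ ((1 / c) • (w - (lam l * y l) • x l)) (x i) : ℝ) =
      (1 / c) * ((inner ℝ w (x i) : ℝ) - lam l * y l * (inner ℝ (x l) (x i) : ℝ)) := by
    intro i
    rw [real_inner_smul_left, inner_sub_left, real_inner_smul_left]
  have hR : ∀ i, i ≠ l → |lam l * y l * (inner ℝ (x l) (x i) : ℝ)| ≤ 0.525 * (εd / m) := by
    intro i hil
    · rw [abs_mul, abs_mul, hyabs l, abs_of_nonneg (hlam l), mul_one]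
      have h1 := hortho l i (Ne.symm hil)
      have h2 : φ ≤ 0.25 * (εd / m) := by
        have : εd / (4 * m) = 0.25 * (εd / m) := by field_simp; ring
        linarith [hφ, this.ge]
      have h3 := mul_le_mul_of_nonneg_left (le_trans h1 h2) (hlam l)
      have h4 := mul_le_mul_of_nonneg_right (hlam_ub l)
        (by positivity : (0:ℝ) ≤ 0.25 * (εd / m))
      linarith [h3, h4]
  refine ⟨?_, ?_, ?_, ?_⟩
  · intro i _
    exact div_nonneg (hlam i) (le_of_lt hc0)
  · -- stationarity
    have hsum : ∑ i ∈ univ.erase l, ((lam i / c) * y i) • x i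
        = (1 / c) • (v - (lam l * y l) • x l) := by
      have h1 : ∑ i ∈ univ.erase l, ((lam i / c) * y i) • x i
          = (1 / c) • ∑ i ∈ univ.erase l, (lam i * y i) • x i := by
        rw [Finset.smul_sum]
        apply Finset.sum_congr rfl
        intro i _
        rw [smul_smul]
        congr 1
        field_simp
      have h2 : ∑ i ∈ univ.erase l, (lam i * y i) • x i = v - (lam l * y l) • x l := by
        rw [hv_def, eq_sub_iff_add_eq]
        exact Finset.sum_erase_add _ _ (mem_univ l)
      rw [h1, h2]
    rw [hsum, ← smul_sub]
    have h3 : w - (lam l * y l) • x l - (v - (lam l * y l) • x l) = w - v := by abel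
    rw [h3, norm_smul]
    have h4 : ‖(1 : ℝ) / c‖ = 1 / c := by
      rw [Real.norm_eq_abs, abs_of_pos (by positivity)]
    rw [h4]
    have h5 : (1 / c) * ‖w - v‖ ≤ (1 / c) * ε₁ :=
      mul_le_mul_of_nonneg_left hwvn (by positivity)
    have h6 : (1 / c) * ε₁ ≤ ε₁ + ε₁ * εd / (m - εd) := by
      have := stmt0_aux4 ε₁ εd m hε₁pos hεdpos (by linarith) hm'
      simpa [hc_def] using this
    linarith
  · -- complementary slackness
    intro i hil
    rw [hinner i]
    have hP := hpf i
    have hPcs := hcs i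
    have hRi := hR i hil
    set R : ℝ := lam l * y l * (inner ℝ (x l) (x i) : ℝ) with hR_def
    set P : ℝ := y i * (inner ℝ w (x i) : ℝ) with hP_def
    have heq : lam i / c * (y i * (1 / c * ((inner ℝ w (x i) : ℝ) - R)) - 1)
        = (lam i * (P - y i * R - c)) / c ^ 2 := by
      rw [hP_def]
      field_simp
    rw [heq]
    have hnum : lam i * (P - y i * R - c) ≤ δ₁ + 2.3625 * (εd / m) := by
      have h1 : lam i * (P - 1) ≤ δ₁ := hPcs
      have h2 : lam i * (1 - c) ≤ 2.1 * (0.6 * (εd / m)) := by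
        have he : 1 - c = 0.6 * (εd / m) := by rw [hc_def]; ring
        rw [he]
        exact mul_le_mul_of_nonneg_right (hlam_ub i) (by positivity)
      have h3 : lam i * (-(y i * R)) ≤ 2.1 * (0.525 * (εd / m)) := by
        have h4 : |y i * R| ≤ 0.525 * (εd / m) := by
          rw [abs_mul, hyabs i, one_mul]; exact hRi
        have h5 := mul_le_mul_of_nonneg_left (neg_le_abs (y i * R)) (hlam i)
        have h6 := mul_le_mul_of_nonneg_left h4 (hlam i)
        have h7 := mul_le_mul_of_nonneg_right (hlam_ub i)
          (by positivity : (0:ℝ) ≤ 0.525 * (εd / m))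
        linarith [h5, h6, h7]
      linarith [h1, h2, h3]
    have hfinal : (lam i * (P - y i * R - c)) / c ^ 2 ≤ δ₁ + 7.2 * εd / m := by
      rw [div_le_iff₀ (by positivity : (0:ℝ) < c ^ 2)]
      have h5 : (δ₁ + 7.2 * εd / m) * c ^ 2 = (δ₁ + 7.2 * (εd / m)) * (1 - 0.6 * (εd / m)) ^ 2 := by
        rw [hc_def]; ring
      rw [h5]
      exact le_trans hnum (stmt0_aux3 δ₁ (εd / m) hδ₁pos hδ₁le hem0 hem)
    have hmid : 0 ≤ δ₁ * εd / (m - εd) := by positivity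
    linarith
  · -- primal feasibility
    intro i hil
    rw [hinner i]
    have hP := hpf i
    have hRi := hR i hil
    have h1 : y i * (1 / c * ((inner ℝ w (x i) : ℝ) - lam l * y l * (inner ℝ (x l) (x i) : ℝ)))
        = (y i * (inner ℝ w (x i) : ℝ) - y i * (lam l * y l * (inner ℝ (x l) (x i) : ℝ))) / c := by
      field_simp
    rw [h1, le_div_iff₀ hc0, one_mul]
    have h2 : |y i * (lam l * y l * (inner ℝ (x l) (x i) : ℝ))| ≤ 0.525 * (εd / m) := by
      rw [abs_mul, hyabs i, one_mul]; exact hRi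
    have h3 : c = 1 - 0.6 * (εd / m) := by rw [hc_def]; ring
    rw [h3]
    have := le_abs_self (y i * (lam l * y l * (inner ℝ (x l) (x i) : ℝ)))
    linarith [hem0]
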